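/- Let R be a commutative ring, E an R-module, and φ : E → E a linear map. Then range φ and ker φ are complementary submodules of E (i.e. φ is crossed with itself) if and only if there exists a linear map ψ : E → E satisfying φ∘ψ∘φ = φ, ψ∘φ∘ψ = ψ, and φ∘ψ = ψ∘φ. Moreover such a ψ (a 'group inverse' of φ) is unique when it exists. -/

import Mathlib

private lemma groupInv_unique {M : Type*} [Monoid M] {a b c : M}
    (a1 : a * (b * a) = a) (h2 : b * (a * b) = b) (c1 : a * b = b * a)
    (a2 : a * (c * a) = a) (h2' : c * (a * c) = c) (c2 : a * c = c * a) :
    b = c := by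
  have hb2 : a * (b * b) = b := by
    calc a * (b * b) = (a * b) * b := (mul_assoc a b b).symm
      _ = (b * a) * b := by rw [c1]
      _ = b * (a * b) := mul_assoc b a b
      _ = b := h2
  have hc2 : (c * c) * a = c := by
    calc (c * c) * a = c * (c * a) := mul_assoc c c a
      _ = c * (a * c) := by rw [← c2]
      _ = c := h2'
  have hb : a * c * b = b := by
    calc a * c * b = a * c * (a * (b * b)) := by rw [hb2]
      _ = (a * (c * a)) * (b * b) := by simp only [mul_assoc]
      _ = a * (b * b) := by rw [a2]
      _ = b := hb2
  have hc : c = b := by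
    calc c = (c * c) * a := hc2.symm
      _ = (c * c) * (a * (b * a)) := by rw [a1]
      _ = ((c * c) * a) * (b * a) := by rw [← mul_assoc]
      _ = c * (b * a) := by rw [hc2]
      _ = c * (a * b) := by rw [← c1]
      _ = (c * a) * b := by rw [← mul_assoc]
      _ = (a * c) * b := by rw [← c2]
      _ = b := hb
  exact hc.symm

theorem stmt7 {R : Type*} [CommRing R] {E : Type*}
    [AddCommGroup E] [Module R E] (φ : E →ₗ[R] E) :
    (IsCompl (LinearMap.range φ) (LinearMap.ker φ) ↔
      ∃ ψ : E →ₗ[R] E, φ ∘ₗ ψ ∘ₗ φ = φ ∧ ψ ∘ₗ φ ∘ₗ ψ = ψ ∧ φ ∘ₗ ψ = ψ ∘ₗ φ) ∧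
    (∀ ψ₁ ψ₂ : E →ₗ[R] E,
      (φ ∘ₗ ψ₁ ∘ₗ φ = φ ∧ ψ₁ ∘ₗ φ ∘ₗ ψ₁ = ψ₁ ∧ φ ∘ₗ ψ₁ = ψ₁ ∘ₗ φ) →
      (φ ∘ₗ ψ₂ ∘ₗ φ = φ ∧ ψ₂ ∘ₗ φ ∘ₗ ψ₂ = ψ₂ ∧ φ ∘ₗ ψ₂ = ψ₂ ∘ₗ φ) →
      ψ₁ = ψ₂) := by
  constructor
  · constructor
    · intro h
      set p := LinearMap.range φ with hp
      set q := LinearMap.ker φ with hq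
      -- projection onto p along q
      set π : E →ₗ[R] p := Submodule.projectionOnto p q h with hπ
      have hmem : ∀ x ∈ p, φ x ∈ p := fun x _ => LinearMap.mem_range_self φ x
      set φ' : p →ₗ[R] p := φ.restrict hmem with hφ'
      have hinj : Function.Injective φ' := by
        intro x y hxy
        have hsub : φ ((x : E) - y) = 0 := by
          have : (φ' x : E) = φ' y := congrArg _ hxy
          simp only [hφ', LinearMap.restrict_apply] at this
          simp [map_sub, this]
        have hker : ((x : E) - y) ∈ q := hsub
        have hpm : ((x : E) - y) ∈ p := sub_mem x.2 y.2
        have := Submodule.disjoint_def.mp h.disjoint _ hpm hker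
        exact Subtype.ext (sub_eq_zero.mp this)
      have hsurj : Function.Surjective φ' := by
        rintro ⟨y, z, rfl⟩
        refine ⟨π z, ?_⟩
        apply Subtype.ext
        simp only [hφ', LinearMap.restrict_apply]
        have hz : z - (π z : E) ∈ q := by
          rw [← Submodule.projectionOnto_apply_eq_zero_iff h]
          simp [hπ, Submodule.projectionOnto_apply_left h, Submodule.projectionOnto_projection]
        have : φ (z - (π z : E)) = 0 := hz
        rw [map_sub, sub_eq_zero] at this
        exact this.symm
      set e := LinearEquiv.ofBijective φ' ⟨hinj, hsurj⟩ with he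
      set ψ : E →ₗ[R] E := p.subtype ∘ₗ (e.symm : p →ₗ[R] p) ∘ₗ π with hψ
      have key1 : ∀ x : E, φ (ψ x) = (π x : E) := by
        intro x
        have : φ (ψ x) = (φ' (e.symm (π x)) : E) := by
          simp [hψ, hφ', LinearMap.restrict_apply]
        rw [this]
        have : φ' (e.symm (π x)) = e (e.symm (π x)) := rfl
        rw [this, e.apply_symm_apply]
      have key2 : ∀ x : E, ψ (φ x) = (π x : E) := by
        intro x
        have hx : φ x = φ ((π x : E)) := by
          have hz : x - (π x : E) ∈ q := by
            rw [← Submodule.projectionOnto_apply_eq_zero_iff h]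
            simp [hπ, Submodule.projectionOnto_apply_left h, Submodule.projectionOnto_projection]
          have : φ (x - (π x : E)) = 0 := hz
          rw [map_sub, sub_eq_zero] at this
          exact this
        have heq : π (φ x) = e (π x) := by
          apply Subtype.ext
          have h1 : (π (φ x) : E) = φ x := by
            have : φ x ∈ p := LinearMap.mem_range_self φ x
            calc (π (φ x) : E) = (π ((⟨φ x, this⟩ : p) : E) : E) := rfl
              _ = ((⟨φ x, this⟩ : p) : E) := by
                  rw [hπ, Submodule.projectionOnto_apply_left h]
          rw [h1]
          show φ x = (φ' (π x) : E)
          simp only [hφ', LinearMap.restrict_apply]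
          exact hx
        calc ψ (φ x) = (e.symm (π (φ x)) : E) := rfl
          _ = (e.symm (e (π x)) : E) := by rw [heq]
          _ = (π x : E) := by rw [e.symm_apply_apply]
      refine ⟨ψ, ?_, ?_, ?_⟩
      · ext x
        simp only [LinearMap.comp_apply]
        rw [key1 (φ x)]
        have : φ x ∈ p := LinearMap.mem_range_self φ x
        calc (π (φ x) : E) = (π ((⟨φ x, this⟩ : p) : E) : E) := rfl
          _ = φ x := by rw [hπ, Submodule.projectionOnto_apply_left h]
      · ext x
        simp only [LinearMap.comp_apply]
        rw [key1 x]
        calc ψ ((π x : E)) = (e.symm (π ((π x : E))) : E) := rfl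
          _ = (e.symm (π x) : E) := by
              rw [hπ, Submodule.projectionOnto_apply_left h]
          _ = ψ x := rfl
      · ext x
        simp only [LinearMap.comp_apply]
        rw [key1 x, key2 x]
    · rintro ⟨ψ, h1, h2, h3⟩
      constructor
      · rw [Submodule.disjoint_def]
        rintro x ⟨y, rfl⟩ hker
        have hker' : φ (φ y) = 0 := hker
        have h1y : φ (ψ (φ y)) = φ y := by
          have := LinearMap.congr_fun h1 y; simpa using this
        calc φ y = φ (ψ (φ y)) := h1y.symm
          _ = ψ (φ (φ y)) := by
              have := LinearMap.congr_fun h3 (φ y)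
              simpa using this
          _ = 0 := by rw [hker', map_zero]
      · rw [codisjoint_iff_le_sup]
        intro x _
        have hx : x = φ (ψ x) + (x - φ (ψ x)) := by abel
        rw [hx]
        apply Submodule.add_mem_sup
        · exact LinearMap.mem_range_self φ (ψ x)
        · show φ (x - φ (ψ x)) = 0
          rw [map_sub, sub_eq_zero]
          have hcomm : φ (ψ x) = ψ (φ x) := by
            have := LinearMap.congr_fun h3 x; simpa using this
          have h1x : φ (ψ (φ x)) = φ x := by
            have := LinearMap.congr_fun h1 x; simpa using this
          rw [hcomm]
          have h2x : φ (ψ (φ x)) = φ x := h1x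
          exact h2x.symm
  · rintro ψ₁ ψ₂ ⟨a1, b1, c1⟩ ⟨a2, b2, c2⟩
    exact groupInv_unique (M := Module.End R E) a1 b1 c1 a2 b2 c2
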